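/- Let P = v_0 v_1 ⋯ v_n be a taut path in G, with edges e_i = v_{i−1}v_i for 1 ≤ i ≤ n. Then for every index i with 1 ≤ i ≤ n, if L(e_i) is finite, then L(e_i) ≥ min(i, n+1−i); that is, an edge of finite level ℓ occurring in a taut path must be the k-th edge counted from one of the two ends of the path for some k ≤ ℓ. -/

import Mathlib

open SimpleGraph

variable {V : Type*}

/-- The set of levels (under `L`) of taut neighbours of edge `e` at vertex `v`:
edges `f` of `G` incident to `v` such that the turn from `e` to `f` at `v` is taut. -/
def tautNbrLevels (G : SimpleGraph V) (taut : V → Sym2 V → Sym2 V → Prop)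
    (L : Sym2 V → ℕ∞) (v : V) (e : Sym2 V) : Set ℕ∞ :=
  {n | ∃ f ∈ G.edgeSet, v ∈ f ∧ taut v e f ∧ n = L f}

/-- The monotone operator on `E → ℕ∞` whose least fixed point defines edge levels:
`(levelOp L) e = 1 + min over the endpoints v of e of sup {L f : f taut neighbour of e at v}`
(with `sSup ∅ = 0`). -/
noncomputable def levelOp (G : SimpleGraph V) (taut : V → Sym2 V → Sym2 V → Prop)
    (L : Sym2 V → ℕ∞) (e : Sym2 V) : ℕ∞ :=
  1 + ⨅ v ∈ e, sSup (tautNbrLevels G taut L v e)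

/-- `L` is the edge-level function: the pointwise least fixed point (on edges of `G`)
of the level operator. -/
def IsEdgeLevel (G : SimpleGraph V) (taut : V → Sym2 V → Sym2 V → Prop)
    (L : Sym2 V → ℕ∞) : Prop :=
  (∀ e ∈ G.edgeSet, L e = levelOp G taut L e) ∧
  ∀ L' : Sym2 V → ℕ∞, (∀ e ∈ G.edgeSet, L' e = levelOp G taut L' e) →
    ∀ e ∈ G.edgeSet, L e ≤ L' e

/-- `p 0, p 1, …, p n` is a taut path in `G`: a walk of length `n ≥ 1` such that at every
interior vertex `p i` (`1 ≤ i ≤ n-1`), the turn from edge `p (i-1) p i` to edge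
`p i p (i+1)` is taut. -/
def IsTautPath (G : SimpleGraph V) (taut : V → Sym2 V → Sym2 V → Prop)
    (n : ℕ) (p : ℕ → V) : Prop :=
  1 ≤ n ∧ (∀ i < n, G.Adj (p i) (p (i + 1))) ∧
  ∀ i, 1 ≤ i → i < n → taut (p i) s(p (i - 1), p i) s(p i, p (i + 1))

/-- Along a taut path `p 0 … p n`, any edge `e_i = p (i-1) p i` (`1 ≤ i ≤ n`) of finite
level satisfies `L e_i ≥ min i (n + 1 - i)`: an edge of finite level `ℓ` occurring in a
taut path must be the `k`-th edge counted from one of the two ends for some `k ≤ ℓ`. -/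
theorem taut_path_finite_level_lower_bound
    [Fintype V] (G : SimpleGraph V)
    (taut : V → Sym2 V → Sym2 V → Prop)
    (taut_symm : ∀ v e f, taut v e f → taut v f e)
    (L : Sym2 V → ℕ∞) (hL : IsEdgeLevel G taut L)
    (n : ℕ) (p : ℕ → V) (hp : IsTautPath G taut n p) :
    ∀ i, 1 ≤ i → i ≤ n → L s(p (i - 1), p i) < ⊤ →
      (min i (n + 1 - i) : ℕ∞) ≤ L s(p (i - 1), p i) := by
  obtain ⟨hLfix, -⟩ := hL
  obtain ⟨hn1, hadj, htaut⟩ := hp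
  have hedge : ∀ i, 1 ≤ i → i ≤ n → s(p (i - 1), p i) ∈ G.edgeSet := by
    intro i h1 h2
    have h := hadj (i - 1) (by omega)
    rw [Nat.sub_add_cancel h1] at h
    exact h
  -- L of any edge equals 1 + min of the two endpoint sups
  have hLeq : ∀ i, 1 ≤ i → i ≤ n →
      L s(p (i - 1), p i) =
        1 + (sSup (tautNbrLevels G taut L (p (i - 1)) s(p (i - 1), p i)) ⊓
             sSup (tautNbrLevels G taut L (p i) s(p (i - 1), p i))) := by
    intro i h1 h2
    rw [hLfix _ (hedge i h1 h2)]
    unfold levelOp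
    congr 1
    apply le_antisymm
    · exact le_inf (iInf₂_le _ (Sym2.mem_mk_left _ _)) (iInf₂_le _ (Sym2.mem_mk_right _ _))
    · refine le_iInf₂ fun v hv => ?_
      rcases Sym2.mem_iff.mp hv with rfl | rfl
      · exact inf_le_left
      · exact inf_le_right
  have key : ∀ ℓ : ℕ, ∀ i, 1 ≤ i → i ≤ n → L s(p (i - 1), p i) = (ℓ : ℕ∞) →
      min i (n + 1 - i) ≤ ℓ := by
    intro ℓ
    induction ℓ using Nat.strong_induction_on with
    | _ ℓ ih =>
      intro i h1 h2 hLe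
      have hone : (1 : ℕ∞) ≤ (ℓ : ℕ∞) := by
        rw [← hLe, hLeq i h1 h2]; exact self_le_add_right _ _
      have hℓ1 : 1 ≤ ℓ := by exact_mod_cast hone
      by_cases hi : i = 1 ∨ i = n
      · omega
      · push_neg at hi
        have h2i : 2 ≤ i := by omega
        have hin : i + 1 ≤ n := by omega
        obtain ⟨m, rfl⟩ : ∃ m, ℓ = m + 1 := ⟨ℓ - 1, by omega⟩
        have heq := hLeq i h1 h2
        rw [hLe] at heq
        have hcast : ((m + 1 : ℕ) : ℕ∞) = 1 + (m : ℕ∞) := by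
          push_cast; ring
        rw [hcast] at heq
        have hmin : (sSup (tautNbrLevels G taut L (p (i - 1)) s(p (i - 1), p i)) ⊓
             sSup (tautNbrLevels G taut L (p i) s(p (i - 1), p i))) = (m : ℕ∞) :=
          (WithTop.add_left_cancel (by exact ENat.one_ne_top) heq).symm
        rcases le_total (sSup (tautNbrLevels G taut L (p (i - 1)) s(p (i - 1), p i)))
            (sSup (tautNbrLevels G taut L (p i) s(p (i - 1), p i))) with hc | hc
        · -- left sup equals m; use edge i-1
          have hSa : sSup (tautNbrLevels G taut L (p (i - 1)) s(p (i - 1), p i)) = (m : ℕ∞) := by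
            rw [← hmin, inf_eq_left.mpr hc]
          have ht : taut (p (i - 1)) s(p (i - 1 - 1), p (i - 1)) s(p (i - 1), p (i - 1 + 1)) :=
            htaut (i - 1) (by omega) (by omega)
          have hi1 : i - 1 + 1 = i := by omega
          rw [hi1] at ht
          have hmem : L s(p (i - 1 - 1), p (i - 1)) ∈
              tautNbrLevels G taut L (p (i - 1)) s(p (i - 1), p i) :=
            ⟨s(p (i - 1 - 1), p (i - 1)), hedge (i - 1) (by omega) (by omega),
              Sym2.mem_mk_right _ _, taut_symm _ _ _ ht, rfl⟩
          have hle : L s(p (i - 1 - 1), p (i - 1)) ≤ (m : ℕ∞) := hSa ▸ le_sSup hmem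
          obtain ⟨m', hm'⟩ := WithTop.ne_top_iff_exists.mp
            (lt_of_le_of_lt hle (WithTop.coe_lt_top m)).ne
          have hm'le : m' ≤ m := by rw [← hm'] at hle; exact WithTop.coe_le_coe.mp hle
          have := ih m' (by omega) (i - 1) (by omega) (by omega) hm'.symm
          omega
        · -- right sup equals m; use edge i+1
          have hSb : sSup (tautNbrLevels G taut L (p i) s(p (i - 1), p i)) = (m : ℕ∞) := by
            rw [← hmin, inf_eq_right.mpr hc]
          have ht : taut (p i) s(p (i - 1), p i) s(p i, p (i + 1)) :=
            htaut i h1 (by omega)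
          have hmem : L s(p i, p (i + 1)) ∈
              tautNbrLevels G taut L (p i) s(p (i - 1), p i) :=
            ⟨s(p i, p (i + 1)), by
              have := hedge (i + 1) (by omega) hin
              simpa using this,
              Sym2.mem_mk_left _ _, ht, rfl⟩
          have hle : L s(p i, p (i + 1)) ≤ (m : ℕ∞) := hSb ▸ le_sSup hmem
          obtain ⟨m', hm'⟩ := WithTop.ne_top_iff_exists.mp
            (lt_of_le_of_lt hle (WithTop.coe_lt_top m)).ne
          have hm'le : m' ≤ m := by rw [← hm'] at hle; exact WithTop.coe_le_coe.mp hle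
          have h2 := ih m' (by omega) (i + 1) (by omega) hin (by
            have : i + 1 - 1 = i := by omega
            rw [this]; exact hm'.symm)
          omega
  intro i h1 h2 hlt
  obtain ⟨ℓ, hℓ⟩ := WithTop.ne_top_iff_exists.mp hlt.ne
  have hk := key ℓ i h1 h2 hℓ.symm
  rw [← hℓ]
  have h' : ((min i (n + 1 - i) : ℕ) : ℕ∞) ≤ (ℓ : ℕ∞) := WithTop.coe_le_coe.mpr hk
  calc (min i (n + 1 - i) : ℕ∞) = ((min i (n + 1 - i) : ℕ) : ℕ∞) := rfl
    _ ≤ _ := h'
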